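/- Let F₁, F₂ : ℝ^{m+1} → ℂ (m ≥ 2) be nonzero harmonic homogeneous polynomials of degree d, and suppose the restrictions f_i = F_i|_{S^m} satisfy g_ℂ(∇^{S^m}f₁, ∇^{S^m}f₂) = μ f₁f₂ on S^m for some μ ∈ ℂ, with f₁f₂ not identically zero. Then μ = −d² and (∇ₓF₁)ᵀ∇ₓF₂ = 0 for all x ∈ ℝ^{m+1}. -/

import Mathlib

open MvPolynomial

/-- Evaluation of a complex polynomial at a real point. -/
noncomputable def pev {n : ℕ} (F : MvPolynomial (Fin n) ℂ) (x : Fin n → ℝ) : ℂ :=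
  eval (fun j => (x j : ℂ)) F

/-- The (complexified) Euclidean gradient of a polynomial at a real point. -/
noncomputable def pgrad {n : ℕ} (F : MvPolynomial (Fin n) ℂ) (x : Fin n → ℝ) : Fin n → ℂ :=
  fun i => pev (pderiv i F) x

/-- The spherical gradient of `F|_{S}` at a point of the unit sphere: the tangential
projection of the Euclidean gradient. -/
noncomputable def ptang {n : ℕ} (F : MvPolynomial (Fin n) ℂ) (x : Fin n → ℝ) : Fin n → ℂ :=
  fun i => pgrad F x i - (∑ j, (x j : ℂ) * pgrad F x j) * (x i : ℂ)


namespace Stmt8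

variable {n : ℕ}

noncomputable def reP (G : MvPolynomial (Fin n) ℂ) : MvPolynomial (Fin n) ℝ :=
  ∑ s ∈ G.support, monomial s (G.coeff s).re

noncomputable def imP (G : MvPolynomial (Fin n) ℂ) : MvPolynomial (Fin n) ℝ :=
  ∑ s ∈ G.support, monomial s (G.coeff s).im

lemma coeff_reP (G : MvPolynomial (Fin n) ℂ) (s : Fin n →₀ ℕ) :
    coeff s (reP G) = (coeff s G).re := by
  rw [reP, coeff_sum]
  simp only [coeff_monomial]
  rw [Finset.sum_ite_eq' G.support s (fun t => (coeff t G).re)]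
  by_cases h : s ∈ G.support
  · simp [h]
  · simp [h, MvPolynomial.notMem_support_iff.mp h]

lemma coeff_imP (G : MvPolynomial (Fin n) ℂ) (s : Fin n →₀ ℕ) :
    coeff s (imP G) = (coeff s G).im := by
  rw [imP, coeff_sum]
  simp only [coeff_monomial]
  rw [Finset.sum_ite_eq' G.support s (fun t => (coeff t G).im)]
  by_cases h : s ∈ G.support
  · simp [h]
  · simp [h, MvPolynomial.notMem_support_iff.mp h]

lemma eval_re_im (G : MvPolynomial (Fin n) ℂ) (x : Fin n → ℝ) :
    eval (fun j => (x j : ℂ)) G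
      = (eval x (reP G) : ℂ) + Complex.I * (eval x (imP G) : ℂ) := by
  rw [eval_eq, reP, imP, map_sum, map_sum]
  push_cast
  rw [Finset.mul_sum, ← Finset.sum_add_distrib]
  refine Finset.sum_congr rfl fun s _ => ?_
  rw [eval_monomial, eval_monomial, Finsupp.prod]
  rw [← Complex.re_add_im (coeff s G)]
  push_cast
  simp only [Complex.add_re, Complex.add_im, Complex.ofReal_re, Complex.ofReal_im,
    Complex.mul_re, Complex.mul_im, Complex.I_re, Complex.I_im]
  ring

lemma eq_zero_of_real_eval (G : MvPolynomial (Fin n) ℂ)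
    (h : ∀ x : Fin n → ℝ, eval (fun j => (x j : ℂ)) G = 0) : G = 0 := by
  have key : ∀ x : Fin n → ℝ, eval x (reP G) = 0 ∧ eval x (imP G) = 0 := by
    intro x
    have hx := h x
    rw [eval_re_im] at hx
    rw [Complex.ext_iff] at hx
    simpa using hx
  have hre : reP G = 0 := MvPolynomial.funext fun x => by simpa using (key x).1
  have him : imP G = 0 := MvPolynomial.funext fun x => by simpa using (key x).2
  ext s
  have h1 := coeff_reP G s
  have h2 := coeff_imP G s
  rw [hre] at h1; rw [him] at h2
  simp only [coeff_zero] at h1 h2 ⊢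
  exact Complex.ext h1.symm h2.symm

lemma degree_coeff_ne {φ : MvPolynomial (Fin n) ℂ} {k : ℕ} (h : φ.IsHomogeneous k)
    {s : Fin n →₀ ℕ} (hs : coeff s φ ≠ 0) : s.degree = k := by
  rw [Finsupp.degree_eq_weight_one]; exact h hs

lemma degree_fin_sum (s : Fin n →₀ ℕ) : s.degree = ∑ i, s i := by
  rw [Finsupp.degree]
  exact Finset.sum_subset (Finset.subset_univ _)
    (by intro x _ hx; simpa using Finsupp.notMem_support_iff.mp hx)

lemma sub_single_add {s : Fin n →₀ ℕ} {i : Fin n} (h : s i ≠ 0) :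
    (s - Finsupp.single i 1) + Finsupp.single i 1 = s := by
  ext j
  simp only [Finsupp.add_apply, Finsupp.tsub_apply, Finsupp.sub_apply, Finsupp.single_apply]
  by_cases hj : i = j
  · subst hj; simp; omega
  · simp [hj]

lemma degree_sub_single {s : Fin n →₀ ℕ} {i : Fin n} (h : s i ≠ 0) :
    (s - Finsupp.single i 1).degree + 1 = s.degree := by
  have hs : (s - Finsupp.single i 1).degree + (Finsupp.single i 1).degree = s.degree := by
    conv_rhs => rw [← sub_single_add h]
    simp [Finsupp.degree_eq_weight_one, map_add]
  have h1 : (Finsupp.single i 1 : Fin n →₀ ℕ).degree = 1 := by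
    simp [degree_fin_sum, Finsupp.single_apply]
  omega

lemma X_eq_monomial (i : Fin n) : (X i : MvPolynomial (Fin n) ℂ) = monomial (Finsupp.single i 1) 1 := by
  rw [← pow_one (X i), X_pow_eq_monomial]

lemma euler_monomial (s : Fin n →₀ ℕ) (c : ℂ) :
    ∑ i, X i * pderiv i (monomial s c) = C ((s.degree : ℂ)) * monomial s c := by
  have key : ∀ i : Fin n, X i * pderiv i (monomial s c) = monomial s (c * s i) := by
    intro i
    rw [pderiv_monomial]
    by_cases h : s i = 0
    · simp [h]
    · rw [X_eq_monomial, monomial_mul, one_mul]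
      rw [add_comm (Finsupp.single i 1) (s - Finsupp.single i 1), sub_single_add h]
  rw [Finset.sum_congr rfl (fun i _ => key i)]
  rw [← map_sum (monomial s), ← Finset.mul_sum, C_mul_monomial]
  congr 1
  rw [degree_fin_sum]
  push_cast
  ring

lemma euler {φ : MvPolynomial (Fin n) ℂ} {k : ℕ} (h : φ.IsHomogeneous k) :
    ∑ i, X i * pderiv i φ = C ((k : ℂ)) * φ := by
  conv_lhs => rw [φ.as_sum]
  simp only [map_sum, Finset.mul_sum]
  rw [Finset.sum_comm]
  conv_rhs => rw [φ.as_sum]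
  rw [Finset.mul_sum]
  refine Finset.sum_congr rfl fun s hs => ?_
  rw [euler_monomial s (coeff s φ), degree_coeff_ne h (mem_support_iff.mp hs)]

lemma pderiv_isHomogeneous {φ : MvPolynomial (Fin n) ℂ} {k : ℕ} (h : φ.IsHomogeneous k)
    (i : Fin n) : (pderiv i φ).IsHomogeneous (k - 1) := by
  conv_lhs => rw [φ.as_sum]
  rw [map_sum]
  apply IsHomogeneous.sum
  intro s hs
  rw [pderiv_monomial]
  by_cases hsi : s i = 0
  · rw [hsi]
    push_cast
    rw [mul_zero]
    rw [monomial_zero]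
    exact isHomogeneous_zero _ _ _
  · apply isHomogeneous_monomial
    have h1 := degree_sub_single hsi
    have h2 := degree_coeff_ne h (mem_support_iff.mp hs)
    omega

lemma hc_top_ne_zero {φ : MvPolynomial (Fin n) ℂ} (h : φ ≠ 0) :
    homogeneousComponent φ.totalDegree φ ≠ 0 := by
  obtain ⟨s, hs, hdeg⟩ := Finset.exists_mem_eq_sup φ.support
    (support_nonempty.mpr h) (fun s => s.sum fun _ e => e)
  have hdeg' : s.degree = φ.totalDegree := by
    rw [MvPolynomial.totalDegree, hdeg]; rfl
  intro hzero
  have := coeff_homogeneousComponent (σ := Fin n) (R := ℂ) φ.totalDegree φ s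
  rw [hzero, if_pos hdeg', coeff_zero] at this
  exact (mem_support_iff.mp hs) this.symm

lemma hc_mul_top (f g : MvPolynomial (Fin n) ℂ) :
    homogeneousComponent (f.totalDegree + g.totalDegree) (f * g)
      = homogeneousComponent f.totalDegree f * homogeneousComponent g.totalDegree g := by
  have expand : f * g = ∑ p ∈ Finset.range (f.totalDegree + 1) ×ˢ Finset.range (g.totalDegree + 1),
      homogeneousComponent p.1 f * homogeneousComponent p.2 g := by
    conv_lhs => rw [← sum_homogeneousComponent f, ← sum_homogeneousComponent g]
    rw [Finset.sum_mul_sum, ← Finset.sum_product']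
  rw [expand, map_sum]
  have hterm : ∀ p : ℕ × ℕ,
      homogeneousComponent (f.totalDegree + g.totalDegree)
        (homogeneousComponent p.1 f * homogeneousComponent p.2 g)
      = if f.totalDegree + g.totalDegree = p.1 + p.2 then
          homogeneousComponent p.1 f * homogeneousComponent p.2 g else 0 := by
    intro p
    exact homogeneousComponent_of_mem
      ((mem_homogeneousSubmodule _ _).mpr
        ((homogeneousComponent_isHomogeneous p.1 f).mul (homogeneousComponent_isHomogeneous p.2 g)))
  rw [Finset.sum_congr rfl fun p _ => hterm p]
  rw [Finset.sum_eq_single (f.totalDegree, g.totalDegree)]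
  · rw [if_pos rfl]
  · rintro ⟨i, j⟩ hmem hne
    rw [Finset.mem_product, Finset.mem_range, Finset.mem_range] at hmem
    rw [if_neg]
    intro hij
    exact hne (Prod.ext (by omega) (by omega))
  · intro habs
    exact absurd (by simp [Finset.mem_product]) habs

lemma totalDegree_mul_eq {f g : MvPolynomial (Fin n) ℂ} (hf : f ≠ 0) (hg : g ≠ 0) :
    (f * g).totalDegree = f.totalDegree + g.totalDegree := by
  refine le_antisymm (totalDegree_mul f g) ?_
  by_contra hlt
  push_neg at hlt
  have h0 := homogeneousComponent_eq_zero (f.totalDegree + g.totalDegree) (f * g) hlt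
  rw [hc_mul_top] at h0
  exact mul_ne_zero (hc_top_ne_zero hf) (hc_top_ne_zero hg) h0

lemma factor_homogeneous {A H : MvPolynomial (Fin n) ℂ} {a N : ℕ}
    (hA : A.IsHomogeneous a) (hA0 : A ≠ 0) (hH : H ≠ 0)
    (hAH : (A * H).IsHomogeneous N) :
    a + H.totalDegree = N ∧ H.IsHomogeneous H.totalDegree := by
  have hAH0 : A * H ≠ 0 := mul_ne_zero hA0 hH
  have hdeg : a + H.totalDegree = N := by
    rw [← hA.totalDegree hA0, ← totalDegree_mul_eq hA0 hH, hAH.totalDegree hAH0]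
  refine ⟨hdeg, ?_⟩
  set t := H.totalDegree with ht
  have hcomp : ∀ i, i ≠ t → homogeneousComponent i H = 0 := by
    intro i hi
    by_cases hir : i ≤ t
    · have expand : A * H = ∑ j ∈ Finset.range (t + 1), A * homogeneousComponent j H := by
        rw [← Finset.mul_sum, sum_homogeneousComponent]
      have h1 : homogeneousComponent (a + i) (A * H) = A * homogeneousComponent i H := by
        conv_lhs => rw [expand]
        rw [map_sum]
        have hterm : ∀ j, homogeneousComponent (a + i) (A * homogeneousComponent j H)
            = if a + i = a + j then A * homogeneousComponent j H else 0 := fun j =>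
          homogeneousComponent_of_mem ((mem_homogeneousSubmodule _ _).mpr
            (hA.mul (homogeneousComponent_isHomogeneous j H)))
        rw [Finset.sum_congr rfl fun j _ => hterm j]
        rw [Finset.sum_eq_single i]
        · rw [if_pos rfl]
        · intro j _ hj
          rw [if_neg (by omega)]
        · intro habs
          exact absurd (Finset.mem_range.mpr (by omega)) habs
      have h2 : homogeneousComponent (a + i) (A * H) = 0 := by
        rw [homogeneousComponent_of_mem ((mem_homogeneousSubmodule _ _).mpr hAH)]
        have hne : ¬ (a + i = N) := by omega
        rw [if_neg hne]
      rw [h2] at h1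
      rcases mul_eq_zero.mp h1.symm with h | h
      · exact absurd h hA0
      · exact h
    · exact homogeneousComponent_eq_zero _ _ (by omega)
  have hH' : H = homogeneousComponent t H := by
    conv_lhs => rw [← sum_homogeneousComponent H]
    rw [Finset.sum_eq_single t]
    · intro j _ hj; exact hcomp j hj
    · intro habs; exact absurd (Finset.mem_range.mpr (by omega)) habs
  rw [hH']
  exact homogeneousComponent_isHomogeneous t H

lemma euler' {φ : MvPolynomial (Fin n) ℂ} {k : ℕ} (h : φ.IsHomogeneous k) :
    ∑ i, X i * pderiv i φ = (k : MvPolynomial (Fin n) ℂ) * φ := by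
  rw [euler h, map_natCast]

noncomputable def r2 (n : ℕ) : MvPolynomial (Fin n) ℂ := ∑ i, X i ^ 2

noncomputable def lap (F : MvPolynomial (Fin n) ℂ) : MvPolynomial (Fin n) ℂ :=
  ∑ i, pderiv i (pderiv i F)

lemma r2_isHomogeneous : (r2 n).IsHomogeneous 2 :=
  IsHomogeneous.sum _ _ _ fun i _ => isHomogeneous_X_pow i 2

lemma r2_ne_zero (hn : 0 < n) : r2 n ≠ 0 := by
  intro h
  have hco := congrArg (coeff (Finsupp.single (⟨0, hn⟩ : Fin n) 2)) h
  rw [r2, coeff_sum, coeff_zero] at hco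
  simp only [X_pow_eq_monomial, coeff_monomial] at hco
  rw [Finset.sum_eq_single (⟨0, hn⟩ : Fin n)] at hco
  · simp at hco
  · intro j _ hj
    rw [if_neg]
    intro habs
    exact hj (by simpa using (Finsupp.single_left_inj (by norm_num)).mp habs)
  · intro habs
    exact absurd (Finset.mem_univ _) habs

lemma pderiv_r2 (i : Fin n) : pderiv i (r2 n) = 2 * X i := by
  rw [r2, map_sum]
  rw [Finset.sum_eq_single i]
  · rw [pderiv_pow, pderiv_X_self]
    push_cast
    ring
  · intro j _ hj
    rw [pderiv_pow, pderiv_X_of_ne hj]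
    ring
  · intro habs
    exact absurd (Finset.mem_univ _) habs

lemma lap_mul (p q : MvPolynomial (Fin n) ℂ) :
    lap (p * q) = lap p * q + 2 * ∑ i, pderiv i p * pderiv i q + p * lap q := by
  unfold lap
  simp only [pderiv_mul, map_add]
  simp only [Finset.sum_add_distrib]
  rw [← Finset.sum_mul, ← Finset.mul_sum, two_mul]
  ring

lemma lap_r2 : lap (r2 n) = ((2 * n : ℕ) : MvPolynomial (Fin n) ℂ) := by
  unfold lap
  have : ∀ i : Fin n, pderiv i (pderiv i (r2 n)) = 2 := by
    intro i
    rw [pderiv_r2]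
    have h2 : (2 : MvPolynomial (Fin n) ℂ) = C 2 := (map_ofNat C 2).symm
    rw [h2, pderiv_C_mul, pderiv_X_self, mul_one, ← h2]
  rw [Finset.sum_congr rfl fun i _ => this i]
  rw [Finset.sum_const, Finset.card_univ, Fintype.card_fin]
  push_cast
  ring

lemma pderiv_r2_pow (j : ℕ) (i : Fin n) :
    pderiv i ((r2 n) ^ (j + 1))
      = ((2 * (j + 1) : ℕ) : MvPolynomial (Fin n) ℂ) * (r2 n) ^ j * X i := by
  rw [pderiv_pow, pderiv_r2]
  simp only [Nat.add_sub_cancel]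
  push_cast
  ring

lemma lap_r2_pow (j : ℕ) :
    lap ((r2 n) ^ (j + 1))
      = ((2 * (j + 1) * (2 * j + n) : ℕ) : MvPolynomial (Fin n) ℂ) * (r2 n) ^ j := by
  induction j with
  | zero =>
    rw [pow_one, lap_r2]
    push_cast
    ring
  | succ j ih =>
    have step : (r2 n) ^ (j + 2) = (r2 n) ^ (j + 1) * r2 n := by ring
    rw [step, lap_mul, ih, lap_r2]
    have hsum : ∑ i, pderiv i ((r2 n) ^ (j + 1)) * pderiv i (r2 n)
        = ((4 * (j + 1) : ℕ) : MvPolynomial (Fin n) ℂ) * (r2 n) ^ (j + 1) := by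
      have : ∀ i : Fin n, pderiv i ((r2 n) ^ (j + 1)) * pderiv i (r2 n)
          = ((4 * (j + 1) : ℕ) : MvPolynomial (Fin n) ℂ) * (r2 n) ^ j * X i ^ 2 := by
        intro i
        rw [pderiv_r2_pow, pderiv_r2]
        push_cast
        ring
      rw [Finset.sum_congr rfl fun i _ => this i, ← Finset.mul_sum, ← r2]
      ring
    rw [hsum]
    push_cast
    ring

lemma sum_pderiv_r2_pow_mul (j : ℕ) {H : MvPolynomial (Fin n) ℂ} {e : ℕ}
    (hH : H.IsHomogeneous e) :
    ∑ i, pderiv i ((r2 n) ^ (j + 1)) * pderiv i H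
      = ((2 * (j + 1) * e : ℕ) : MvPolynomial (Fin n) ℂ) * (r2 n) ^ j * H := by
  have : ∀ i : Fin n, pderiv i ((r2 n) ^ (j + 1)) * pderiv i H
      = ((2 * (j + 1) : ℕ) : MvPolynomial (Fin n) ℂ) * (r2 n) ^ j * (X i * pderiv i H) := by
    intro i
    rw [pderiv_r2_pow]
    ring
  rw [Finset.sum_congr rfl fun i _ => this i, ← Finset.mul_sum, euler' hH]
  push_cast
  ring

lemma descent (hn : 0 < n) {F : MvPolynomial (Fin n) ℂ} {k : ℕ}
    (hhom : F.IsHomogeneous k) (hlap : lap F = 0) (hdvd : r2 n ∣ F) : F = 0 := by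
  by_contra hF
  have key : ∀ j : ℕ, (r2 n) ^ (j + 1) ∣ F := by
    intro j
    induction j with
    | zero => simpa using hdvd
    | succ j ih =>
      obtain ⟨H, hH⟩ := ih
      have hH0 : H ≠ 0 := by
        rintro rfl
        rw [mul_zero] at hH
        exact hF hH
      have hr2p : ((r2 n) ^ (j + 1)).IsHomogeneous (2 * (j + 1)) :=
        r2_isHomogeneous.pow (j + 1)
      have hr2p0 : (r2 n) ^ (j + 1) ≠ 0 := pow_ne_zero _ (r2_ne_zero hn)
      obtain ⟨hdeg, hHhom⟩ := factor_homogeneous hr2p hr2p0 hH0 (hH ▸ hhom)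
      set e := H.totalDegree with he
      set A : ℕ := 2 * (j + 1) * (2 * j + n) + 2 * (j + 1) * e * 2 with hA
      have hlapF : lap F = (r2 n) ^ j *
          (((A : ℕ) : MvPolynomial (Fin n) ℂ) * H + r2 n * lap H) := by
        rw [hH, lap_mul, lap_r2_pow, sum_pderiv_r2_pow_mul j hHhom]
        rw [hA]
        push_cast
        ring
      rw [hlap] at hlapF
      have hzero : ((A : ℕ) : MvPolynomial (Fin n) ℂ) * H + r2 n * lap H = 0 := by
        rcases mul_eq_zero.mp hlapF.symm with h | h
        · exact absurd h (pow_ne_zero _ (r2_ne_zero hn))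
        · exact h
      have hAne : ((A : ℂ)) ≠ 0 := by
        rw [Nat.cast_ne_zero]
        have h1 : 0 < 2 * j + n := by omega
        have h2 : 0 < A := by
          rw [hA]
          exact Nat.add_pos_left (Nat.mul_pos (by omega) h1) _
        omega
      have hHeq : H = r2 n * (C (-(A : ℂ)⁻¹) * lap H) := by
        have h1 : ((A : ℕ) : MvPolynomial (Fin n) ℂ) * H = -(r2 n * lap H) := by
          linear_combination hzero
        have h2 : ((A : ℕ) : MvPolynomial (Fin n) ℂ) = C ((A : ℂ)) := by
          rw [map_natCast]
        calc H = C ((A : ℂ))⁻¹ * (C ((A : ℂ)) * H) := by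
              rw [← mul_assoc, ← map_mul, inv_mul_cancel₀ hAne, map_one, one_mul]
          _ = C ((A : ℂ))⁻¹ * -(r2 n * lap H) := by rw [← h2, h1]
          _ = r2 n * (C (-(A : ℂ)⁻¹) * lap H) := by
              rw [map_neg]
              ring
      exact ⟨C (-(A : ℂ)⁻¹) * lap H, by rw [pow_succ, mul_assoc, ← hHeq, hH]⟩
  obtain ⟨H, hH⟩ := key k
  have hH0 : H ≠ 0 := by
    rintro rfl
    rw [mul_zero] at hH
    exact hF hH
  obtain ⟨hdeg, -⟩ := factor_homogeneous (r2_isHomogeneous.pow (k + 1))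
    (pow_ne_zero _ (r2_ne_zero hn)) hH0 (hH ▸ hhom)
  omega

lemma eq_C_of_totalDegree_eq_zero {f : MvPolynomial (Fin n) ℂ} (h : f.totalDegree = 0) :
    f = C (coeff 0 f) := by
  have h' := (totalDegree_eq_zero_iff (Fin n) f).mp h
  ext s
  by_cases hs : s = 0
  · subst hs; simp
  · rw [coeff_C, if_neg (fun habs => hs habs.symm)]
    by_contra hc
    exact hs (Finsupp.ext fun x => h' s (mem_support_iff.mpr hc) x)

lemma degree_one_single {s : Fin n →₀ ℕ} (h : s.degree = 1) :
    ∃ i, s = Finsupp.single i 1 := by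
  have hs0 : s ≠ 0 := by rintro rfl; simp [map_zero] at h
  obtain ⟨i, hi⟩ := Finsupp.support_nonempty_iff.mpr hs0
  refine ⟨i, ?_⟩
  have hle := Finsupp.le_degree i s
  have hine := Finsupp.mem_support_iff.mp hi
  have hsi : s i = 1 := by omega
  have hsupp : s.support = {i} := by
    apply Finset.eq_singleton_iff_unique_mem.mpr
    refine ⟨hi, ?_⟩
    intro j hj
    by_contra hji
    have hsub : ({i, j} : Finset (Fin n)) ⊆ s.support := by
      intro x hx
      rcases Finset.mem_insert.mp hx with rfl | hx
      · exact hi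
      · rw [Finset.mem_singleton.mp hx]; exact hj
    have h2 : s i + s j ≤ s.degree := by
      rw [Finsupp.degree]
      calc s i + s j = ∑ x ∈ ({i, j} : Finset (Fin n)), s x := by
            rw [Finset.sum_insert (by rw [Finset.mem_singleton]; exact fun h => hji h.symm), Finset.sum_singleton]
        _ ≤ _ := Finset.sum_le_sum_of_subset hsub
    have hj1 := Finsupp.mem_support_iff.mp hj
    omega
  obtain ⟨-, hform⟩ := Finsupp.support_eq_singleton.mp hsupp
  rw [hform, hsi]

lemma eq_linear_of_homog1 {f : MvPolynomial (Fin n) ℂ} (h : f.IsHomogeneous 1) :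
    f = ∑ i, C (coeff (Finsupp.single i 1) f) * X i := by
  ext s
  rw [coeff_sum]
  simp only [coeff_C_mul, coeff_X']
  by_cases hs : ∃ i, s = Finsupp.single i 1
  · obtain ⟨i, rfl⟩ := hs
    rw [Finset.sum_eq_single i]
    · rw [if_pos rfl, mul_one]
    · intro j _ hj
      rw [if_neg, mul_zero]
      intro habs
      exact hj ((Finsupp.single_left_inj one_ne_zero).mp habs)
    · intro habs; exact absurd (Finset.mem_univ _) habs
  · push_neg at hs
    have hzero : coeff s f = 0 := by
      by_contra hc
      obtain ⟨i, hi⟩ := degree_one_single (degree_coeff_ne h hc)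
      exact hs i hi
    rw [hzero]
    symm
    apply Finset.sum_eq_zero
    intro j _
    rw [if_neg (fun habs => hs j habs.symm), mul_zero]

lemma sum_ind (i : Fin n) (w : Fin n → ℂ) :
    ∑ l, w l * (if l = i then (1:ℂ) else 0) = w i := by
  simp [mul_ite, Finset.sum_ite_eq']

lemma sum_ind2 {i j : Fin n} (w : Fin n → ℂ) :
    ∑ l, w l * ((if l = i then (1:ℂ) else 0) + (if l = j then 1 else 0)) = w i + w j := by
  simp only [mul_add, Finset.sum_add_distrib]
  rw [sum_ind i w, sum_ind j w]

lemma r2_irreducible (hn : 3 ≤ n) : Irreducible (r2 n) := by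
  have h0 : r2 n ≠ 0 := r2_ne_zero (by omega)
  have hdeg2 : (r2 n).totalDegree = 2 := r2_isHomogeneous.totalDegree h0
  constructor
  · intro hu
    obtain ⟨v, hv⟩ := isUnit_iff_exists_inv.mp hu
    have hv0 : v ≠ 0 := by rintro rfl; rw [mul_zero] at hv; exact zero_ne_one hv
    have := totalDegree_mul_eq h0 hv0
    rw [hv, hdeg2] at this
    rw [totalDegree_one] at this
    omega
  · intro f g hfg
    by_contra hcon
    push_neg at hcon
    obtain ⟨hf, hg⟩ := hcon
    have hf0 : f ≠ 0 := by rintro rfl; rw [zero_mul] at hfg; exact h0 hfg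
    have hg0 : g ≠ 0 := by rintro rfl; rw [mul_zero] at hfg; exact h0 hfg
    have hdegsum : f.totalDegree + g.totalDegree = 2 := by
      rw [← totalDegree_mul_eq hf0 hg0, ← hfg, hdeg2]
    have hfd : f.totalDegree ≠ 0 := by
      intro h
      apply hf
      rw [eq_C_of_totalDegree_eq_zero h]
      have : coeff 0 f ≠ 0 := by
        intro hc
        apply hf0
        rw [eq_C_of_totalDegree_eq_zero h, hc, map_zero]
      exact this.isUnit.map C
    have hgd : g.totalDegree ≠ 0 := by
      intro h
      apply hg
      rw [eq_C_of_totalDegree_eq_zero h]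
      have : coeff 0 g ≠ 0 := by
        intro hc
        apply hg0
        rw [eq_C_of_totalDegree_eq_zero h, hc, map_zero]
      exact this.isUnit.map C
    have hfd1 : f.totalDegree = 1 := by omega
    have hgd1 : g.totalDegree = 1 := by omega
    -- homogeneous components
    set f0 := homogeneousComponent 0 f with hf0def
    set f1 := homogeneousComponent 1 f with hf1def
    set g0 := homogeneousComponent 0 g with hg0def
    set g1 := homogeneousComponent 1 g with hg1def
    have hfsplit : f = f0 + f1 := by
      conv_lhs => rw [← sum_homogeneousComponent f]
      rw [hfd1]
      rw [Finset.sum_range_succ, Finset.sum_range_one]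
    have hgsplit : g = g0 + g1 := by
      conv_lhs => rw [← sum_homogeneousComponent g]
      rw [hgd1]
      rw [Finset.sum_range_succ, Finset.sum_range_one]
    have hf1ne : f1 ≠ 0 := by rw [hf1def, ← hfd1]; exact hc_top_ne_zero hf0
    have hg1ne : g1 ≠ 0 := by rw [hg1def, ← hgd1]; exact hc_top_ne_zero hg0
    have hprod : r2 n = f0 * g0 + (f0 * g1 + f1 * g0) + f1 * g1 := by
      rw [hfg, hfsplit, hgsplit]; ring
    have hhc : ∀ k : ℕ, k ≠ 2 → homogeneousComponent k (r2 n) = 0 := by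
      intro k hk
      rw [homogeneousComponent_of_mem ((mem_homogeneousSubmodule _ _).mpr r2_isHomogeneous),
        if_neg hk]
    have hcomp : ∀ k : ℕ,
        homogeneousComponent k (f0 * g0 + (f0 * g1 + f1 * g0) + f1 * g1)
        = homogeneousComponent k (f0 * g0) + (homogeneousComponent k (f0 * g1)
            + homogeneousComponent k (f1 * g0)) + homogeneousComponent k (f1 * g1) := by
      intro k
      simp [map_add]
    have hmem00 := (homogeneousComponent_isHomogeneous 0 f).mul (homogeneousComponent_isHomogeneous 0 g)
    have hmem01 := (homogeneousComponent_isHomogeneous 0 f).mul (homogeneousComponent_isHomogeneous 1 g)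
    have hmem10 := (homogeneousComponent_isHomogeneous 1 f).mul (homogeneousComponent_isHomogeneous 0 g)
    have hmem11 := (homogeneousComponent_isHomogeneous 1 f).mul (homogeneousComponent_isHomogeneous 1 g)
    have h00 : f0 * g0 = 0 := by
      have h := congrArg (homogeneousComponent 0) hprod
      rw [hhc 0 (by omega), map_add, map_add, map_add] at h
      rw [homogeneousComponent_of_mem ((mem_homogeneousSubmodule _ _).mpr hmem00), if_pos rfl] at h
      rw [homogeneousComponent_of_mem ((mem_homogeneousSubmodule _ _).mpr hmem01), if_neg (by omega)] at h
      rw [homogeneousComponent_of_mem ((mem_homogeneousSubmodule _ _).mpr hmem10), if_neg (by omega)] at h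
      rw [homogeneousComponent_of_mem ((mem_homogeneousSubmodule _ _).mpr hmem11), if_neg (by omega)] at h
      simp only [add_zero, zero_add] at h
      exact h.symm
    have h01 : f0 * g1 + f1 * g0 = 0 := by
      have h := congrArg (homogeneousComponent 1) hprod
      rw [hhc 1 (by omega), map_add, map_add, map_add] at h
      rw [homogeneousComponent_of_mem ((mem_homogeneousSubmodule _ _).mpr hmem00), if_neg (by omega)] at h
      rw [homogeneousComponent_of_mem ((mem_homogeneousSubmodule _ _).mpr hmem01), if_pos (by omega)] at h
      rw [homogeneousComponent_of_mem ((mem_homogeneousSubmodule _ _).mpr hmem10), if_pos (by omega)] at h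
      rw [homogeneousComponent_of_mem ((mem_homogeneousSubmodule _ _).mpr hmem11), if_neg (by omega)] at h
      simp only [add_zero, zero_add] at h
      exact h.symm
    have hboth : f0 = 0 ∧ g0 = 0 := by
      rcases mul_eq_zero.mp h00 with h | h
      · refine ⟨h, ?_⟩
        rw [h, zero_mul, zero_add] at h01
        rcases mul_eq_zero.mp h01 with h' | h'
        · exact absurd h' hf1ne
        · exact h'
      · refine ⟨?_, h⟩
        rw [h, mul_zero, add_zero] at h01
        rcases mul_eq_zero.mp h01 with h' | h'
        · exact h'
        · exact absurd h' hg1ne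
    obtain ⟨hf00, hg00⟩ := hboth
    have hfhom : f.IsHomogeneous 1 := by
      rw [hfsplit, hf00, zero_add, hf1def]
      exact homogeneousComponent_isHomogeneous 1 f
    have hghom : g.IsHomogeneous 1 := by
      rw [hgsplit, hg00, zero_add, hg1def]
      exact homogeneousComponent_isHomogeneous 1 g
    set a : Fin n → ℂ := fun i => coeff (Finsupp.single i 1) f with hadef
    set b : Fin n → ℂ := fun i => coeff (Finsupp.single i 1) g with hbdef
    have heval : ∀ z : Fin n → ℂ,
        (∑ i, z i * z i) = (∑ i, a i * z i) * (∑ i, b i * z i) := by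
      intro z
      have h := congrArg (eval z) hfg
      rw [map_mul] at h
      have hr : eval z (r2 n) = ∑ i, z i * z i := by
        rw [r2, map_sum]
        refine Finset.sum_congr rfl fun i _ => ?_
        rw [eval_pow, eval_X, sq]
      have hfe : eval z f = ∑ i, a i * z i := by
        conv_lhs => rw [eq_linear_of_homog1 hfhom]
        rw [map_sum]
        refine Finset.sum_congr rfl fun i _ => ?_
        rw [map_mul, eval_C, eval_X]
      have hge : eval z g = ∑ i, b i * z i := by
        conv_lhs => rw [eq_linear_of_homog1 hghom]
        rw [map_sum]
        refine Finset.sum_congr rfl fun i _ => ?_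
        rw [map_mul, eval_C, eval_X]
      rw [hr, hfe, hge] at h
      exact h
    have ha : ∀ i, a i * b i = 1 := by
      intro i
      have h := heval (fun l => if l = i then (1:ℂ) else 0)
      simp only [mul_ite, ite_mul, mul_one, mul_zero, one_mul, zero_mul,
        Finset.sum_ite_eq', Finset.mem_univ, if_true] at h
      exact h.symm
    have hpair : ∀ i j : Fin n, i ≠ j →
        (a i + a j) * (b i + b j) = 2 := by
      intro i j hij
      have h := heval (fun l => (if l = i then (1:ℂ) else 0) + (if l = j then 1 else 0))
      simp only [mul_add, add_mul, mul_ite, ite_mul, mul_one, mul_zero, one_mul, zero_mul,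
        Finset.sum_add_distrib, Finset.sum_ite_eq', Finset.mem_univ, if_true,
        hij, hij.symm, if_false] at h
      linear_combination -h
    set i0 : Fin n := ⟨0, by omega⟩
    set i1 : Fin n := ⟨1, by omega⟩
    set i2 : Fin n := ⟨2, by omega⟩
    have d01 : i0 ≠ i1 := by simp [Fin.ext_iff]
    have d12 : i1 ≠ i2 := by simp [i1, i2, Fin.ext_iff]
    have d02 : i0 ≠ i2 := by simp [Fin.ext_iff]
    have u0 := ha i0
    have u1 := ha i1
    have u2 := ha i2
    have e01 : a i0 * b i1 + a i1 * b i0 = 0 := by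
      linear_combination hpair i0 i1 d01 - u0 - u1
    have e12 : a i1 * b i2 + a i2 * b i1 = 0 := by
      linear_combination hpair i1 i2 d12 - u1 - u2
    have e02 : a i0 * b i2 + a i2 * b i0 = 0 := by
      linear_combination hpair i0 i2 d02 - u0 - u2
    have k1 : a i0 * b i2 = (a i0 * b i1) * (a i1 * b i2) := by
      linear_combination (-(a i0 * b i2)) * u1
    have k2 : a i2 * b i0 = (a i2 * b i1) * (a i1 * b i0) := by
      linear_combination (-(a i2 * b i0)) * u1
    have k3 : a i0 * b i2 = a i2 * b i0 := by
      linear_combination k1 - k2 + (a i1 * b i2) * e01 - (a i1 * b i0) * e12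
    have z1 : a i0 * b i2 = 0 := by
      linear_combination (1/2 : ℂ) * k3 + (1/2 : ℂ) * e02
    have final : (1 : ℂ) = 0 := by
      linear_combination (-(a i2 * b i2)) * u0 - u2 + (a i2 * b i0) * z1
    exact one_ne_zero final

lemma eval_scale {φ : MvPolynomial (Fin n) ℂ} {k : ℕ} (h : φ.IsHomogeneous k)
    (t : ℂ) (z : Fin n → ℂ) :
    eval (fun j => t * z j) φ = t ^ k * eval z φ := by
  conv_lhs => rw [φ.as_sum]
  rw [map_sum]
  conv_rhs => rw [φ.as_sum, map_sum, Finset.mul_sum]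
  refine Finset.sum_congr rfl fun s hs => ?_
  rw [eval_monomial, eval_monomial, Finsupp.prod, Finsupp.prod]
  rw [Finset.prod_congr rfl (fun i _ => mul_pow t (z i) (s i))]
  rw [Finset.prod_mul_distrib, Finset.prod_pow_eq_pow_sum]
  have hd : ∑ i ∈ s.support, s i = k := by
    have h1 := degree_coeff_ne h (mem_support_iff.mp hs)
    rw [Finsupp.degree] at h1
    exact h1
  rw [hd]
  ring

end Stmt8

open Stmt8

/-- If `F₁, F₂` are nonzero harmonic homogeneous polynomials of degree `d` on `ℝ^{m+1}`, `m ≥ 2`,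
whose restrictions `fᵢ = Fᵢ|_{S^m}` satisfy `g_ℂ(∇^{S^m}f₁, ∇^{S^m}f₂) = μ f₁f₂` with `f₁f₂` not
identically zero on the sphere, then `μ = -d²` and `(∇ₓF₁)ᵀ∇ₓF₂ = 0` everywhere. -/
theorem stmt8 {m : ℕ} (hm : 2 ≤ m) (d : ℕ) (F₁ F₂ : MvPolynomial (Fin (m + 1)) ℂ)
    (hne₁ : F₁ ≠ 0) (hne₂ : F₂ ≠ 0)
    (hhom₁ : F₁.IsHomogeneous d) (hhom₂ : F₂.IsHomogeneous d)
    (hharm₁ : ∑ i : Fin (m + 1), pderiv i (pderiv i F₁) = 0)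
    (hharm₂ : ∑ i : Fin (m + 1), pderiv i (pderiv i F₂) = 0)
    (μ : ℂ)
    (heig : ∀ x : Fin (m + 1) → ℝ, ∑ j, x j ^ 2 = 1 →
      ∑ i, ptang F₁ x i * ptang F₂ x i = μ * pev F₁ x * pev F₂ x)
    (hnz : ∃ x : Fin (m + 1) → ℝ, ∑ j, x j ^ 2 = 1 ∧ pev F₁ x * pev F₂ x ≠ 0) :
    μ = -(d : ℂ) ^ 2 ∧ ∀ x : Fin (m + 1) → ℝ, ∑ i, pgrad F₁ x i * pgrad F₂ x i = 0 := by
  classical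
  set P : MvPolynomial (Fin (m + 1)) ℂ := ∑ i, pderiv i F₁ * pderiv i F₂ with hP
  have hPev : ∀ x : Fin (m + 1) → ℝ,
      (∑ i, pgrad F₁ x i * pgrad F₂ x i) = eval (fun j => (x j : ℂ)) P := by
    intro x
    rw [hP, map_sum]
    refine Finset.sum_congr rfl fun i _ => ?_
    rw [map_mul]
    rfl
  rcases Nat.eq_zero_or_pos d with hd0 | hdpos
  · -- degree-zero case
    subst hd0
    have hF₁C : F₁ = C (coeff 0 F₁) :=
      eq_C_of_totalDegree_eq_zero (hhom₁.totalDegree hne₁)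
    have hF₂C : F₂ = C (coeff 0 F₂) :=
      eq_C_of_totalDegree_eq_zero (hhom₂.totalDegree hne₂)
    have hpd₁ : ∀ i, pderiv i F₁ = 0 := by
      intro i; rw [hF₁C, pderiv_C]
    have hpd₂ : ∀ i, pderiv i F₂ = 0 := by
      intro i; rw [hF₂C, pderiv_C]
    obtain ⟨x₀, hx₀s, hx₀⟩ := hnz
    have htan : ∀ i, ptang F₁ x₀ i = 0 := by
      intro i
      simp [ptang, pgrad, pev, hpd₁]
    have h := heig x₀ hx₀s
    rw [Finset.sum_congr rfl (fun i _ => by rw [htan i, zero_mul])] at h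
    rw [Finset.sum_const, smul_zero] at h
    have hμ : μ = 0 := by
      rcases mul_eq_zero.mp h.symm with h' | h'
      · rcases mul_eq_zero.mp h' with h'' | h''
        · exact h''
        · exact absurd (by rw [h'', zero_mul]) hx₀
      · exact absurd (by rw [h', mul_zero]) hx₀
    constructor
    · rw [hμ]; norm_num
    · intro x
      refine Finset.sum_eq_zero fun i _ => ?_
      rw [show pgrad F₁ x i = 0 from by simp [pgrad, pev, hpd₁], zero_mul]
  · -- main case
    obtain ⟨e, rfl⟩ : ∃ e, d = e + 1 := ⟨d - 1, by omega⟩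
    set c : ℂ := μ + ((e + 1 : ℕ) : ℂ) ^ 2 with hc
    have hsphere : ∀ x : Fin (m + 1) → ℝ, (∑ j, x j ^ 2) = 1 →
        eval (fun j => (x j : ℂ)) P = c * (pev F₁ x * pev F₂ x) := by
      intro x hx
      have h := heig x hx
      have hxc : (∑ j, ((x j : ℝ) : ℂ) ^ 2) = 1 := by
        have h2 := congrArg (fun r : ℝ => (r : ℂ)) hx
        push_cast at h2
        exact h2
      have hA : (∑ j, (x j : ℂ) * pgrad F₁ x j) = ((e + 1 : ℕ) : ℂ) * pev F₁ x := by
        have he := congrArg (eval (fun j => (x j : ℂ))) (euler hhom₁)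
        rw [map_sum, map_mul, eval_C] at he
        rw [Finset.sum_congr rfl (fun i _ => by rw [map_mul, eval_X])] at he
        exact he
      have hB : (∑ j, (x j : ℂ) * pgrad F₂ x j) = ((e + 1 : ℕ) : ℂ) * pev F₂ x := by
        have he := congrArg (eval (fun j => (x j : ℂ))) (euler hhom₂)
        rw [map_sum, map_mul, eval_C] at he
        rw [Finset.sum_congr rfl (fun i _ => by rw [map_mul, eval_X])] at he
        exact he
      have hLHS : ∑ i, ptang F₁ x i * ptang F₂ x i
          = (∑ i, pgrad F₁ x i * pgrad F₂ x i)
            - (∑ j, (x j : ℂ) * pgrad F₁ x j) * (∑ j, (x j : ℂ) * pgrad F₂ x j)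
              * (2 - ∑ j, ((x j : ℝ) : ℂ) ^ 2) := by
        simp only [ptang]
        set SA := ∑ j, (x j : ℂ) * pgrad F₁ x j with hSA
        set SB := ∑ j, (x j : ℂ) * pgrad F₂ x j with hSB
        have expand : ∀ i, (pgrad F₁ x i - SA * (x i : ℂ)) * (pgrad F₂ x i - SB * (x i : ℂ))
            = pgrad F₁ x i * pgrad F₂ x i - SA * ((x i : ℂ) * pgrad F₂ x i)
              - SB * ((x i : ℂ) * pgrad F₁ x i) + (SA * SB) * ((x i : ℂ)) ^ 2 := by
          intro i; ring
        rw [Finset.sum_congr rfl fun i _ => expand i]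
        rw [Finset.sum_add_distrib, Finset.sum_sub_distrib, Finset.sum_sub_distrib,
          ← Finset.mul_sum, ← Finset.mul_sum, ← Finset.mul_sum, ← hSA, ← hSB]
        ring
      rw [hLHS, hxc, hA, hB, hPev x] at h
      rw [hc]
      linear_combination h
    -- homogeneity of P and G
    have hpd₁h : ∀ i, (pderiv i F₁).IsHomogeneous e := by
      intro i
      have := pderiv_isHomogeneous hhom₁ i
      simpa using this
    have hpd₂h : ∀ i, (pderiv i F₂).IsHomogeneous e := by
      intro i
      have := pderiv_isHomogeneous hhom₂ i
      simpa using this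
    have hPhom : P.IsHomogeneous (e + e) := by
      rw [hP]
      exact IsHomogeneous.sum _ _ _ fun i _ => (hpd₁h i).mul (hpd₂h i)
    set G : MvPolynomial (Fin (m + 1)) ℂ := r2 (m + 1) * P - C c * (F₁ * F₂) with hG
    have hGhom : G.IsHomogeneous (2 + (e + e)) := by
      rw [hG]
      apply IsHomogeneous.sub
      · exact r2_isHomogeneous.mul hPhom
      · have h1 := (isHomogeneous_C (Fin (m + 1)) c).mul (hhom₁.mul hhom₂)
        have h2 : 0 + ((e + 1) + (e + 1)) = 2 + (e + e) := by omega
        rwa [h2] at h1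
    have hGzero : ∀ x : Fin (m + 1) → ℝ, eval (fun j => (x j : ℂ)) G = 0 := by
      intro y
      by_cases hy : y = 0
      · subst hy
        have hfun : (fun j : Fin (m + 1) => ((0 : ℝ) : ℂ)) = (0 : Fin (m + 1) → ℂ) := by
          funext j; simp
        show eval (fun j => ((0 : ℝ) : ℂ)) G = 0
        rw [hfun, eval_zero, constantCoeff_eq]
        exact hGhom.coeff_eq_zero (by simp [map_zero]; omega)
      · have hex : ∃ j, y j ≠ 0 := Function.ne_iff.mp hy
        have htpos : 0 < ∑ j, y j ^ 2 := by
          obtain ⟨j0, hj0⟩ := hex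
          apply Finset.sum_pos' (fun j _ => sq_nonneg (y j))
          exact ⟨j0, Finset.mem_univ _, by positivity⟩
        set t : ℝ := Real.sqrt (∑ j, y j ^ 2) with ht
        have hts : t ^ 2 = ∑ j, y j ^ 2 := Real.sq_sqrt htpos.le
        have htne : t ≠ 0 := by
          have := Real.sqrt_pos.mpr htpos
          rw [← ht] at this
          exact ne_of_gt this
        set x : Fin (m + 1) → ℝ := fun j => y j / t with hxdef
        have hxs : ∑ j, x j ^ 2 = 1 := by
          rw [hxdef]
          simp only [div_pow]
          rw [← Finset.sum_div, ← hts]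
          exact div_self (pow_ne_zero 2 htne)
        have hfun : (fun j => ((y j : ℝ) : ℂ)) = fun j => (t : ℂ) * ((x j : ℝ) : ℂ) := by
          funext j
          rw [hxdef]
          have htc : (t : ℂ) ≠ 0 := Complex.ofReal_ne_zero.mpr htne
          push_cast
          field_simp
        rw [hfun, eval_scale hGhom]
        have hevalx : eval (fun j => ((x j : ℝ) : ℂ)) G = 0 := by
          rw [hG, map_sub, map_mul, map_mul, eval_C]
          have hr2x : eval (fun j => ((x j : ℝ) : ℂ)) (r2 (m + 1)) = 1 := by
            rw [r2, map_sum]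
            rw [Finset.sum_congr rfl (fun j _ => by rw [map_pow, eval_X])]
            have h2 := congrArg (fun r : ℝ => (r : ℂ)) hxs
            push_cast at h2
            exact h2
          rw [hr2x, one_mul, hsphere x hxs, map_mul]
          rw [pev, pev]
          ring
        rw [hevalx, mul_zero]
    have hGeq : G = 0 := eq_zero_of_real_eval _ hGzero
    have hkey : r2 (m + 1) * P = C c * (F₁ * F₂) := by
      have := sub_eq_zero.mp (hG ▸ hGeq)
      exact this
    have hc0 : c = 0 := by
      by_contra hcne
      have hprime : Prime (r2 (m + 1)) :=
        UniqueFactorizationMonoid.irreducible_iff_prime.mp (r2_irreducible (by omega))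
      have hdvd : r2 (m + 1) ∣ C c * (F₁ * F₂) := by
        rw [← hkey]; exact dvd_mul_right _ _
      rcases hprime.2.2 _ _ hdvd with h | h
      · have hunit : IsUnit (C c : MvPolynomial (Fin (m + 1)) ℂ) := (isUnit_iff_ne_zero.mpr hcne).map C
        exact hprime.2.1 (isUnit_of_dvd_unit h hunit)
      · rcases hprime.2.2 _ _ h with h1 | h1
        · exact hne₁ (descent (by omega) hhom₁ hharm₁ h1)
        · exact hne₂ (descent (by omega) hhom₂ hharm₂ h1)
    have hPzero : P = 0 := by
      have : r2 (m + 1) * P = 0 := by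
        rw [hkey, hc0, map_zero, zero_mul]
      rcases mul_eq_zero.mp this with h | h
      · exact absurd h (r2_ne_zero (by omega))
      · exact h
    constructor
    · have : μ + ((e + 1 : ℕ) : ℂ) ^ 2 = 0 := hc ▸ hc0
      push_cast at this ⊢
      linear_combination this
    · intro x
      rw [hPev x, hPzero, map_zero]
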